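/- Let r, l, d, M be positive integers with M(M-1) ≤ r·d²·l. Then d·l/M ≥ ⌊√(rl)⌋/r as rational numbers, i.e., r·d·l ≥ ⌊√(rl)⌋·M. -/
import Mathlib

theorem stmt16 (r l d M : ℕ) (hr : 0 < r) (hl : 0 < l) (hd : 0 < d) (hM : 0 < M)
    (h : M * (M - 1) ≤ r * d ^ 2 * l) :
    ((d * l : ℚ) / M ≥ (Nat.sqrt (r * l) : ℚ) / r) ∧
      Nat.sqrt (r * l) * M ≤ r * d * l := by
  have hkey : Nat.sqrt (r * l) * M ≤ r * d * l := by
    set s := Nat.sqrt (r * l) with hsdef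
    have hsq : s * s ≤ r * l := by simpa [pow_two] using Nat.sqrt_le' (r * l)
    rcases le_or_gt M (d * s) with hc | hc
    · calc s * M ≤ s * (d * s) := Nat.mul_le_mul_left _ hc
        _ = d * (s * s) := by ring
        _ ≤ d * (r * l) := Nat.mul_le_mul_left _ hsq
        _ = r * d * l := by ring
    · have h1 : d * s ≤ M - 1 := Nat.le_sub_one_of_lt hc
      have h2 : d * (s * M) ≤ d * (r * d * l) := by
        calc d * (s * M) = (d * s) * M := by ring
          _ ≤ (M - 1) * M := Nat.mul_le_mul_right _ h1
          _ = M * (M - 1) := Nat.mul_comm _ _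
          _ ≤ r * d ^ 2 * l := h
          _ = d * (r * d * l) := by ring
      exact Nat.le_of_mul_le_mul_left h2 hd
  refine ⟨?_, hkey⟩
  rw [ge_iff_le, div_le_div_iff₀ (by positivity) (by positivity)]
  have : ((Nat.sqrt (r * l) * M : ℕ) : ℚ) ≤ ((r * d * l : ℕ) : ℚ) := by exact_mod_cast hkey
  push_cast at this ⊢
  linarith [this]
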